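/- Let A and A' be finite lists of distinct symbols such that no three symbols appear in the same order in A and A', and split each into halves A_0, A_1 and A'_0, A'_1. Then ∑_{ε ∈ {0,1} such that A_ε and A'_ε are intersection-reverse} |A_ε ∩ A'_ε|² ≥ 2 · |A_0 ∩ A'_0| · |A_1 ∩ A'_1|. -/

import Mathlib

/-- Three symbols appear in the same order in lists `A` and `B`:
there are pairwise distinct symbols `a, b, c` such that the list `[a, b, c]`
is a subsequence of both `A` and `B`. -/
def SameOrder3 {α : Type*} (A B : List α) : Prop :=
  ∃ a b c : α, a ≠ b ∧ a ≠ c ∧ b ≠ c ∧ [a, b, c].Sublist A ∧ [a, b, c].Sublist B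

/-- Two lists of distinct symbols are intersection-reverse if their common
elements appear in reverse order in the two lists. -/
def IntRev {α : Type*} (B B' : List α) : Prop :=
  ∀ a ∈ B, ∀ b ∈ B, a ≠ b → a ∈ B' → b ∈ B' →
    ([a, b].Sublist B ↔ [b, a].Sublist B')

instance {α : Type*} [DecidableEq α] (B B' : List α) : Decidable (IntRev B B') := by
  unfold IntRev; infer_instance

/-- The first half of a list: its initial segment of length `⌈ℓ/2⌉`. -/
def half0 {α : Type*} (A : List α) : List α := A.take ((A.length + 1) / 2)

/-- The second half of a list: its final segment of length `⌊ℓ/2⌋`. -/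
def half1 {α : Type*} (A : List α) : List α := A.drop ((A.length + 1) / 2)

/-- `interCard B B'` is the number of symbols occurring in both `B` and `B'`. -/
def interCard {α : Type*} [DecidableEq α] (B B' : List α) : ℕ :=
  (B.filter fun x => decide (x ∈ B')).length

lemma pair_sublist {α : Type*} {B : List α} {a b : α}
    (ha : a ∈ B) (hb : b ∈ B) (hab : a ≠ b) :
    [a, b].Sublist B ∨ [b, a].Sublist B := by
  induction B with
  | nil => simp at ha
  | cons x xs ih =>
    rcases eq_or_ne a x with rfl | hax
    · left
      have hb' : b ∈ xs := by
        rcases List.mem_cons.mp hb with h | h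
        · exact absurd h.symm hab
        · exact h
      exact (List.singleton_sublist.mpr hb').cons₂ a
    · rcases eq_or_ne b x with rfl | hbx
      · right
        have ha' : a ∈ xs := by
          rcases List.mem_cons.mp ha with h | h
          · exact absurd h hax
          · exact h
        exact (List.singleton_sublist.mpr ha').cons₂ b
      · have ha' : a ∈ xs := by
          rcases List.mem_cons.mp ha with h | h
          · exact absurd h hax
          · exact h
        have hb' : b ∈ xs := by
          rcases List.mem_cons.mp hb with h | h
          · exact absurd h hbx
          · exact h
        exact (ih ha' hb').imp (·.cons x) (·.cons x)

lemma exists_same_pair {α : Type*} {B B' : List α} (h : ¬ IntRev B B') :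
    ∃ a b, a ≠ b ∧ [a, b].Sublist B ∧ [a, b].Sublist B' := by
  unfold IntRev at h
  push_neg at h
  obtain ⟨a, haB, b, hbB, hab, haB', hbB', hiff⟩ := h
  rcases hiff with ⟨hp, hq⟩ | ⟨hp, hq⟩
  · rcases pair_sublist haB' hbB' hab with h1 | h1
    · exact ⟨a, b, hab, hp, h1⟩
    · exact absurd h1 hq
  · rcases pair_sublist haB hbB hab with h1 | h1
    · exact absurd h1 hp
    · exact ⟨b, a, hab.symm, h1, hq⟩

/-- Let `A` and `A'` be lists of distinct symbols such that no three symbols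
appear in the same order in `A` and `A'`, split into halves. Then
`∑_{ε : A_ε, A'_ε int-rev} |A_ε ∩ A'_ε|² ≥ 2 |A_0 ∩ A'_0| |A_1 ∩ A'_1|`. -/
theorem stmt_7 {α : Type*} [DecidableEq α] (A A' : List α)
    (hA : A.Nodup) (hA' : A'.Nodup) (h3 : ¬ SameOrder3 A A') :
    (if IntRev (half0 A) (half0 A') then (interCard (half0 A) (half0 A')) ^ 2 else 0)
      + (if IntRev (half1 A) (half1 A') then (interCard (half1 A) (half1 A')) ^ 2 else 0)
      ≥ 2 * interCard (half0 A) (half0 A') * interCard (half1 A) (half1 A') := by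
  have hsplit : half0 A ++ half1 A = A := List.take_append_drop _ _
  have hsplit' : half0 A' ++ half1 A' = A' := List.take_append_drop _ _
  have hdisj : List.Disjoint (half0 A) (half1 A) :=
    List.disjoint_take_drop hA le_rfl
  have hdisj' : List.Disjoint (half0 A') (half1 A') :=
    List.disjoint_take_drop hA' le_rfl
  by_cases hI0 : IntRev (half0 A) (half0 A')
  · by_cases hI1 : IntRev (half1 A) (half1 A')
    · simp only [hI0, hI1, if_true]
      nlinarith [sq_nonneg (interCard (half0 A) (half0 A') - interCard (half1 A) (half1 A') : ℤ)]
    · -- half1 not int-rev : same-order pair in second halves, so first halves share nothing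
      have hm : interCard (half0 A) (half0 A') = 0 := by
        obtain ⟨b, c, hbc, hB, hB'⟩ := exists_same_pair hI1
        rw [interCard, List.length_eq_zero_iff, List.filter_eq_nil_iff]
        intro a ha ha'
        simp only [decide_eq_true_eq] at ha'
        have hbA : b ∈ half1 A := hB.subset (by simp)
        have hcA : c ∈ half1 A := hB.subset (by simp)
        have hab : a ≠ b := fun h => hdisj ha (h ▸ hbA)
        have hac : a ≠ c := fun h => hdisj ha (h ▸ hcA)
        refine h3 ⟨a, b, c, hab, hac, hbc, ?_, ?_⟩
        · rw [← hsplit]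
          exact List.Sublist.append (List.singleton_sublist.mpr ha) hB
        · rw [← hsplit']
          exact List.Sublist.append (List.singleton_sublist.mpr ha') hB'
      simp [hm]
  · -- half0 not int-rev : same-order pair in first halves, so second halves share nothing
    have hn : interCard (half1 A) (half1 A') = 0 := by
      obtain ⟨a, b, hab, hB, hB'⟩ := exists_same_pair hI0
      rw [interCard, List.length_eq_zero_iff, List.filter_eq_nil_iff]
      intro c hc hc'
      simp only [decide_eq_true_eq] at hc'
      have haA : a ∈ half0 A := hB.subset (by simp)
      have hbA : b ∈ half0 A := hB.subset (by simp)
      have hac : a ≠ c := fun h => hdisj haA (h ▸ hc)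
      have hbc : b ≠ c := fun h => hdisj hbA (h ▸ hc)
      refine h3 ⟨a, b, c, hab, hac, hbc, ?_, ?_⟩
      · rw [← hsplit]
        exact List.Sublist.append hB (List.singleton_sublist.mpr hc)
      · rw [← hsplit']
        exact List.Sublist.append hB' (List.singleton_sublist.mpr hc')
    simp [hn]
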